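/- Let (E,ℒ,𝒜) be a weakly left-resolving, normal labelled space, and let α, β ∈ ℒ^{≥1} and γ ∈ ℒ^{≤∞} be such that αβγ ∈ ℒ^{≤∞}. Then G_{(αβ)γ} = G_{(α)βγ} ∘ G_{(β)γ} and H_{[β]γ} ∘ H_{[α]βγ} = H_{[αβ]γ}. -/

import Mathlib

open Classical

universe u v w

/-! ## Words over an alphabet -/

/-- Finite-or-infinite words over the alphabet `A`: `Sum.inl l` is the finite word `l`
(with `[]` playing the role of the empty word `ω`), and `Sum.inr f` is the infinite word `f`. -/
abbrev Word (A : Type w) := List A ⊕ (ℕ → A)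

/-- The length `|α| ∈ ℕ∞` of a word. -/
def wlength {A : Type w} : Word A → ℕ∞ :=
  Sum.elim (fun l => (l.length : ℕ∞)) fun _ => ⊤

/-- The finite prefix `α_{1,n}` of a word `α`. -/
def wprefix {A : Type w} : Word A → ℕ → List A :=
  Sum.elim (fun l n => l.take n) fun f n => List.ofFn fun i : Fin n => f i

/-- Concatenation `αβ` of a finite word `α` with a word `β`. -/
def wappend {A : Type w} (α : List A) : Word A → Word A :=
  Sum.elim (fun l => Sum.inl (α ++ l)) fun f =>
    Sum.inr fun n => if h : n < α.length then α.get ⟨n, h⟩ else f (n - α.length)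

/-- `β` is a beginning (finite prefix) of the word `α`. -/
def WPrefix {A : Type w} (β : List A) : Word A → Prop :=
  Sum.elim (fun l => β <+: l) fun f => β = List.ofFn fun i : Fin β.length => f i

/-! ## Triples -/

/-- Formal triples `(α, X, β)` together with a zero element; the inverse semigroup `S`
of a labelled space consists of such elements. -/
inductive Tr (V : Type u) (A : Type w) where
  | zero : Tr V A
  | mk : List A → Set V → List A → Tr V A

/-- The involution `(α,A,β)* = (β,A,α)` (fixing `0`). -/
def Tr.tstar {V : Type u} {A : Type w} : Tr V A → Tr V A
  | .zero => .zero
  | .mk α X β => .mk β X α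

/-! ## Labelled spaces -/

/-- The data of a labelled space `(E, ℒ, 𝒜)`: a directed graph on nonempty vertex/edge
sets, a surjective labelling map onto the alphabet `A`, and a family `𝒜` of subsets
of the vertex set. -/
structure LblSp (V : Type u) (E : Type v) (A : Type w) where
  src : E → V
  rng : E → V
  lab : E → A
  lab_surj : Function.Surjective lab
  nonempty_V : Nonempty V
  nonempty_E : Nonempty E
  𝒜 : Set (Set V)

namespace LblSp

variable {V : Type u} {Ed : Type v} {A : Type w} (Λ : LblSp V Ed A)

/-- `α ≠ ω` is the label of some finite path of the graph. -/
def IsPathLabel (α : List A) : Prop :=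
  ∃ l : List Ed, l ≠ [] ∧ List.Chain' (fun e f => Λ.rng e = Λ.src f) l ∧ l.map Λ.lab = α

/-- `ℒ^*`: the finite labelled paths, together with the empty word. -/
def LStar : Set (List A) := {α | α = [] ∨ Λ.IsPathLabel α}

/-- `ℒ^∞`: the infinite labelled paths. -/
def LInfty : Set (ℕ → A) :=
  {f | ∃ e : ℕ → Ed, (∀ n, Λ.rng (e n) = Λ.src (e (n + 1))) ∧ ∀ n, Λ.lab (e n) = f n}

/-- `ℒ^{≤∞} = ℒ^* ∪ ℒ^∞`, as a predicate on `Word A`. -/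
def IsWordW : Word A → Prop := Sum.elim (· ∈ Λ.LStar) (· ∈ Λ.LInfty)

/-- The relative range `r(X, α)` (with `r(X, ω) = X`). -/
noncomputable def relRange (X : Set V) (α : List A) : Set V :=
  if α = [] then X
  else {v | ∃ (l : List Ed) (h : l ≠ []), List.Chain' (fun e f => Λ.rng e = Λ.src f) l ∧
        l.map Λ.lab = α ∧ Λ.src (l.head h) ∈ X ∧ Λ.rng (l.getLast h) = v}

/-- The range `r(α) = r(E⁰, α)`. -/
noncomputable def rangeL (α : List A) : Set V := Λ.relRange Set.univ α

/-- `𝒜^α = {X ∈ 𝒜 : X ⊆ r(α)}`. -/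
noncomputable def Aset (α : List A) : Set (Set V) := {X | X ∈ Λ.𝒜 ∧ X ⊆ Λ.rangeL α}

/-- `(E, ℒ, 𝒜)` is a labelled space: `𝒜` is closed under finite intersections and
unions, contains all ranges `r(α)` for `α ∈ ℒ^{≥1}`, and is closed under relative ranges. -/
structure IsLS : Prop where
  inter_mem : ∀ X ∈ Λ.𝒜, ∀ Y ∈ Λ.𝒜, X ∩ Y ∈ Λ.𝒜
  union_mem : ∀ X ∈ Λ.𝒜, ∀ Y ∈ Λ.𝒜, X ∪ Y ∈ Λ.𝒜
  range_mem : ∀ α ∈ Λ.LStar, α ≠ [] → Λ.rangeL α ∈ Λ.𝒜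
  relRange_mem : ∀ X ∈ Λ.𝒜, ∀ α ∈ Λ.LStar, Λ.relRange X α ∈ Λ.𝒜

/-- A weakly left-resolving labelled space. -/
structure IsWLR : Prop where
  toIsLS : Λ.IsLS
  wlr : ∀ X ∈ Λ.𝒜, ∀ Y ∈ Λ.𝒜, ∀ α ∈ Λ.LStar, α ≠ [] →
    Λ.relRange (X ∩ Y) α = Λ.relRange X α ∩ Λ.relRange Y α

/-- A weakly left-resolving normal labelled space. -/
structure IsNormal : Prop where
  toIsWLR : Λ.IsWLR
  sdiff_mem : ∀ X ∈ Λ.𝒜, ∀ Y ∈ Λ.𝒜, X \ Y ∈ Λ.𝒜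

/-! ## The inverse semigroup `S` -/

/-- The underlying set of the inverse semigroup
`S = {(α,A,β) : α, β ∈ ℒ^*, A ∈ 𝒜^α ∩ 𝒜^β, A ≠ ∅} ∪ {0}`. -/
def SSet : Set (Tr V A) :=
  {t | t = Tr.zero ∨ ∃ α X β, t = Tr.mk α X β ∧ α ∈ Λ.LStar ∧ β ∈ Λ.LStar ∧
    X ∈ Λ.Aset α ∧ X ∈ Λ.Aset β ∧ X.Nonempty}

/-- The semilattice of idempotents `E(S) = {(α,A,α)} ∪ {0}`. -/
def ESet : Set (Tr V A) :=
  {t | t = Tr.zero ∨ ∃ α X, t = Tr.mk α X α ∧ α ∈ Λ.LStar ∧ X ∈ Λ.Aset α ∧ X.Nonempty}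

/-- The product of `S`. -/
noncomputable def tmul : Tr V A → Tr V A → Tr V A
  | Tr.zero, _ => Tr.zero
  | Tr.mk _ _ _, Tr.zero => Tr.zero
  | Tr.mk α X β, Tr.mk γ Y δ =>
    if β <+: γ ∧ (Λ.relRange X (γ.drop β.length) ∩ Y).Nonempty then
      Tr.mk (α ++ γ.drop β.length) (Λ.relRange X (γ.drop β.length) ∩ Y) δ
    else if γ <+: β ∧ (X ∩ Λ.relRange Y (β.drop γ.length)).Nonempty then
      Tr.mk α (X ∩ Λ.relRange Y (β.drop γ.length)) (δ ++ β.drop γ.length)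
    else Tr.zero

/-! ## Filters in `E(S)`, characters, and the tight spectrum -/

/-- A filter in `E(S)`: a nonempty subset of `E(S) ∖ {0}` closed under products and
upward closed in the natural order (`p ≤ q ↔ pq = p`). -/
def IsFilterES (ξ : Set (Tr V A)) : Prop :=
  ξ.Nonempty ∧ (∀ t ∈ ξ, t ∈ Λ.ESet ∧ t ≠ Tr.zero) ∧
  (∀ p ∈ ξ, ∀ q ∈ ξ, Λ.tmul p q ∈ ξ) ∧
  (∀ p ∈ ξ, ∀ q ∈ Λ.ESet, Λ.tmul p q = p → q ∈ ξ)

/-- An ultrafilter in `E(S)`. -/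
def IsUltraES (ξ : Set (Tr V A)) : Prop :=
  Λ.IsFilterES ξ ∧ ∀ ζ, Λ.IsFilterES ζ → ξ ⊆ ζ → ξ = ζ

/-- The character (indicator function) of a filter. -/
noncomputable def charOf (_Λ : LblSp V Ed A) (ξ : Set (Tr V A)) : Tr V A → Bool :=
  fun t => if t ∈ ξ then true else false

/-- A character of `E(S)`: a nonzero, zero- and meet-preserving `{0,1}`-valued map on
`E(S)` (encoded as a map on triples vanishing outside `E(S)`). -/
def IsChar (φ : Tr V A → Bool) : Prop :=
  (∃ e, φ e = true) ∧ (∀ e, e ∉ Λ.ESet → φ e = false) ∧ φ Tr.zero = false ∧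
  ∀ e ∈ Λ.ESet, ∀ f ∈ Λ.ESet, φ (Λ.tmul e f) = (φ e && φ f)

/-- The tight spectrum `Ê_tight`: the closure, within the space of characters with the
topology of pointwise convergence, of the set of characters of ultrafilters. -/
def tightSpectrum : Set (Tr V A → Bool) :=
  {φ | Λ.IsChar φ} ∩ closure {φ | ∃ ξ, Λ.IsUltraES ξ ∧ φ = Λ.charOf ξ}

/-- A tight filter: a filter whose character lies in the tight spectrum. -/
def IsTightFilter (ξ : Set (Tr V A)) : Prop :=
  Λ.IsFilterES ξ ∧ Λ.charOf ξ ∈ Λ.tightSpectrum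

/-- `ξ_{|β|} = {B : (β, B, β) ∈ ξ}`, the filter of `ξ` at level `β`. -/
def filterAt (_Λ : LblSp V Ed A) (ξ : Set (Tr V A)) (β : List A) : Set (Set V) :=
  {B | Tr.mk β B β ∈ ξ}

/-- `α` is the word associated with the filter `ξ` (i.e. `ξ = ξ^α`): the nonempty finite
beginnings of `α` are exactly the words appearing in elements of `ξ`. -/
def HasWord (_Λ : LblSp V Ed A) (ξ : Set (Tr V A)) (α : Word A) : Prop :=
  ∀ β : List A, β ≠ [] → ((∃ B, Tr.mk β B β ∈ ξ) ↔ WPrefix β α)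

/-! ## Filters and ultrafilters in `𝒜^β` -/

/-- A filter in the Boolean algebra `𝒜^β`. -/
def IsFilterAset (β : List A) (F : Set (Set V)) : Prop :=
  F.Nonempty ∧ F ⊆ Λ.Aset β ∧ (∀ X ∈ F, X.Nonempty) ∧
  (∀ X ∈ F, ∀ Y ∈ F, X ∩ Y ∈ F) ∧ (∀ X ∈ F, ∀ Y ∈ Λ.Aset β, X ⊆ Y → Y ∈ F)

/-- An ultrafilter in `𝒜^β` (an element of `X_β`). -/
def IsUltraAset (β : List A) (F : Set (Set V)) : Prop :=
  Λ.IsFilterAset β F ∧ ∀ G, Λ.IsFilterAset β G → F ⊆ G → F = G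

/-- The gluing map `g_{(α)β}(F) = {C ∩ r(αβ) : C ∈ F}` on ultrafilters. -/
noncomputable def gmap (α β : List A) (F : Set (Set V)) : Set (Set V) :=
  {X | ∃ C ∈ F, X = C ∩ Λ.rangeL (α ++ β)}

/-- The cutting map `h_{[α]β}(F) = {C ∈ 𝒜^β : D ⊆ C for some D ∈ F}` on ultrafilters. -/
noncomputable def hmap (α β : List A) (F : Set (Set V)) : Set (Set V) :=
  {C | C ∈ Λ.Aset β ∧ ∃ D ∈ F, D ⊆ C}

/-! ## Cutting and gluing of (tight) filters in `E(S)` -/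

/-- The cutting map `H_{[α]β} : T^{αβ} → T^{(α)β}` (word-free formulation): the filter
whose family is `η_n = h_{[α]β_{1,n}}(ξ_{n+|α|})`; `H_{[ω]β}` is the identity. -/
noncomputable def Hcut (α : List A) (ξ : Set (Tr V A)) : Set (Tr V A) :=
  if α = [] then ξ
  else {t | ∃ δ B, t = Tr.mk δ B δ ∧ B ∈ Λ.Aset δ ∧
        ∃ D, Tr.mk (α ++ δ) D (α ++ δ) ∈ ξ ∧ D ⊆ B}

/-- The gluing map `G_{(α)β} : T^{(α)β} → T^{αβ}` (word-free formulation): the filter with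
family `η_{|α|+n} = g_{(α)β_{1,n}}(ξ_n)` for `n ≥ 1` and `η_i = f_{α_{1,i}[…]}(…)` for
`i ≤ |α|`, with the two cases according to whether the word of `ξ` is empty (`β = ω`)
or not; `G_{(ω)β}` is the identity. -/
noncomputable def Gglue (α : List A) (ξ : Set (Tr V A)) : Set (Tr V A) :=
  if α = [] then ξ
  else if ∃ (δ : List A) (B : Set V), δ ≠ [] ∧ Tr.mk δ B δ ∈ ξ then
    {t | ∃ δ B, t = Tr.mk δ B δ ∧
      ((α <+: δ ∧ α ≠ δ ∧ ∃ C, Tr.mk (δ.drop α.length) C (δ.drop α.length) ∈ ξ ∧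
          B = C ∩ Λ.rangeL δ) ∨
       (δ <+: α ∧ B ∈ Λ.Aset δ ∧ ∃ (b : A) (C : Set V), Tr.mk [b] C [b] ∈ ξ ∧
          Λ.relRange B (α.drop δ.length ++ [b]) = C ∩ Λ.rangeL (α ++ [b])))}
  else
    {t | ∃ δ B, t = Tr.mk δ B δ ∧ δ <+: α ∧ B ∈ Λ.Aset δ ∧
      ∃ C, Tr.mk [] C [] ∈ ξ ∧ Λ.relRange B (α.drop δ.length) = C ∩ Λ.rangeL α}

/-- `T^β`: the set of tight filters with associated word `β`. -/
def TWord (β : Word A) : Set (Set (Tr V A)) :=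
  {ξ | Λ.IsTightFilter ξ ∧ Λ.HasWord ξ β}

/-- `T^{(α)β} = {ξ ∈ T^β : r(α) ∈ ξ_0}` (equal to `T^β` when `α = ω`), the domain of the
gluing map `G_{(α)β}`. -/
def TGlueDom (α : List A) (β : Word A) : Set (Set (Tr V A)) :=
  {ξ | Λ.IsTightFilter ξ ∧ Λ.HasWord ξ β ∧ (α ≠ [] → Tr.mk [] (Λ.rangeL α) [] ∈ ξ)}

/-! ## The groupoid `Γ` -/

/-- The defining relation of
`Γ = {(ξ^{aγ}, |a|-|b|, η^{bγ}) ∈ T × ℤ × T : H_{[a]γ}(ξ^{aγ}) = H_{[b]γ}(η^{bγ})}`. -/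
def InGamma (η : Set (Tr V A)) (m : ℤ) (ξ : Set (Tr V A)) : Prop :=
  ∃ (a b : List A) (γ : Word A), a ∈ Λ.LStar ∧ b ∈ Λ.LStar ∧ Λ.IsWordW γ ∧
    η ∈ Λ.TWord (wappend a γ) ∧ ξ ∈ Λ.TWord (wappend b γ) ∧
    m = (a.length : ℤ) - (b.length : ℤ) ∧ Λ.Hcut a η = Λ.Hcut b ξ

/-- `Γ` as a set of raw triples. -/
def GammaRaw : Set (Set (Tr V A) × ℤ × Set (Tr V A)) :=
  {p | Λ.InGamma p.1 p.2.1 p.2.2}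

/-- The basic set `Z_{s,e:e₁,…,eₙ}` of `Γ` (raw version), for `s = (μ, X, ν)`:
triples `(η^{μγ}, |μ|-|ν|, ξ^{νγ}) ∈ Γ` with `e ∈ ξ`, `eᵢ ∉ ξ` and
`H_{[μ]γ}(η) = H_{[ν]γ}(ξ)`. -/
noncomputable def ZrawGen (μ ν : List A) (e : Tr V A) (es : List (Tr V A)) :
    Set (Set (Tr V A) × ℤ × Set (Tr V A)) :=
  {p | Λ.InGamma p.1 p.2.1 p.2.2 ∧ p.2.1 = (μ.length : ℤ) - (ν.length : ℤ) ∧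
       e ∈ p.2.2 ∧ (∀ f ∈ es, f ∉ p.2.2) ∧
       ∃ γ : Word A, Λ.HasWord p.1 (wappend μ γ) ∧ Λ.HasWord p.2.2 (wappend ν γ) ∧
         Λ.Hcut μ p.1 = Λ.Hcut ν p.2.2}

/-- `Z_s = Z_{s, s*s}` for `s = (μ, X, ν)` (raw version). -/
noncomputable def Zraw (μ : List A) (X : Set V) (ν : List A) :
    Set (Set (Tr V A) × ℤ × Set (Tr V A)) :=
  Λ.ZrawGen μ ν (Tr.mk ν X ν) []

/-- The basic set `V_{e:e₁,…,eₙ} = U_{e:e₁,…,eₙ} ∩ T` of the tight filter space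
(raw version). -/
def VrawGen (e : Tr V A) (es : List (Tr V A)) : Set (Set (Tr V A)) :=
  {ξ | Λ.IsTightFilter ξ ∧ e ∈ ξ ∧ ∀ f ∈ es, f ∉ ξ}

/-- The shift map `σ : T^{(1)} → T`, `σ(ξ^{aγ}) = H_{[a]γ}(ξ^{aγ})` (extended by the
identity off its domain). -/
noncomputable def sigmaMap (ξ : Set (Tr V A)) : Set (Tr V A) :=
  if h : ∃ a : A, ∃ B : Set V, Tr.mk [a] B [a] ∈ ξ then Λ.Hcut [h.choose] ξ else ξ

/-- The Renault–Deaconu basic set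
`𝒱(X, Y, m, n) = {(η, m-n, ξ) ∈ Γ : (η, ξ) ∈ X × Y, σ^m(η) = σ^n(ξ)}` (raw version). -/
noncomputable def VrdRaw (Xs Ys : Set (Set (Tr V A))) (m n : ℕ) :
    Set (Set (Tr V A) × ℤ × Set (Tr V A)) :=
  {p | Λ.InGamma p.1 p.2.1 p.2.2 ∧ p.2.1 = (m : ℤ) - (n : ℤ) ∧
       p.1 ∈ Xs ∧ p.2.2 ∈ Ys ∧ (Λ.sigmaMap)^[m] p.1 = (Λ.sigmaMap)^[n] p.2.2}

/-! ## The groupoid of germs `𝒢_tight` -/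

/-- The action `θ_s(φ)(e) = φ(s* e s)` of `S` on characters. -/
noncomputable def theta (s : Tr V A) (φ : Tr V A → Bool) : Tr V A → Bool :=
  fun e => if e ∈ Λ.ESet then φ (Λ.tmul (Λ.tmul (Tr.tstar s) e) s) else false

/-- `Ω = {(s, φ) ∈ S × Ê_tight : φ ∈ D_{s*s}}`. -/
noncomputable def Omega : Set (Tr V A × (Tr V A → Bool)) :=
  {p | p.1 ∈ Λ.SSet ∧ p.2 ∈ Λ.tightSpectrum ∧ p.2 (Λ.tmul (Tr.tstar p.1) p.1) = true}

/-- The germ equivalence relation on `Ω`: `(s,φ) ∼ (t,ψ)` iff `φ = ψ` and there is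
`e ∈ E(S)` with `φ(e) = 1` and `se = te`. -/
noncomputable def germEquiv (p q : Tr V A × (Tr V A → Bool)) : Prop :=
  p.2 = q.2 ∧ ∃ e ∈ Λ.ESet, p.2 e = true ∧ Λ.tmul p.1 e = Λ.tmul q.1 e

/-- The map `Φ` at the level of `Ω`: for `t = (β, X, γ)` and `φ` with filter `ξ^α`
(where `α = γα'`), `Φ[t,φ] = ((G_{(β)α'} ∘ H_{[γ]α'})(ξ^α), |β|-|γ|, ξ^α)`. -/
noncomputable def PhiRaw : Tr V A → (Tr V A → Bool) → Set (Tr V A) × ℤ × Set (Tr V A)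
  | Tr.zero, _ => (∅, 0, ∅)
  | Tr.mk β _ γ, φ =>
      (Λ.Gglue β (Λ.Hcut γ {e | φ e = true}), (β.length : ℤ) - (γ.length : ℤ),
        {e | φ e = true})

/-! ## Miscellaneous notions -/

/-- `ℒ(XE¹) = {ℒ(e) : e ∈ E¹, s(e) ∈ X}`. -/
def labE (X : Set V) : Set A := {a | ∃ e, Λ.lab e = a ∧ Λ.src e ∈ X}

/-- The set `E⁰_sink` of sinks. -/
def sinks : Set V := {v | ∀ e, Λ.src e ≠ v}

/-- The filter in `E(S)` associated with a pair (word, complete family). -/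
def pairFilter (_Λ : LblSp V Ed A) (α : Word A) (F : ℕ → Set (Set V)) : Set (Tr V A) :=
  {t | ∃ (n : ℕ) (B : Set V), (n : ℕ∞) ≤ wlength α ∧ B ∈ F n ∧
    t = Tr.mk (wprefix α n) B (wprefix α n)}

/-- A complete family for the word `α`: `F n` is a filter in `𝒜^{α_{1,n}}` for
`1 ≤ n ≤ |α|` (`F 0` is a filter in `𝒜` or empty, and a filter if `α = ω`), and
`F n = {X ∈ 𝒜^{α_{1,n}} : r(X, α_{n+1}) ∈ F (n+1)}` for all `n < |α|`. -/
noncomputable def IsCompleteFamily (α : Word A) (F : ℕ → Set (Set V)) : Prop :=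
  Λ.IsWordW α ∧
  (∀ n : ℕ, 1 ≤ n → (n : ℕ∞) ≤ wlength α → Λ.IsFilterAset (wprefix α n) (F n)) ∧
  (F 0 = ∅ ∨ Λ.IsFilterAset [] (F 0)) ∧
  (wlength α = 0 → Λ.IsFilterAset [] (F 0)) ∧
  (∀ n : ℕ, ((n + 1 : ℕ) : ℕ∞) ≤ wlength α →
    F n = {X | X ∈ Λ.Aset (wprefix α n) ∧
      Λ.relRange X ((wprefix α (n + 1)).drop n) ∈ F (n + 1)})

/-! ## The tight filter space `T` and the groupoid `Γ` as types -/

/-- The space `T` of tight filters. -/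
structure TightT where
  carrier : Set (Tr V A)
  tight : Λ.IsTightFilter carrier

/-- The topology of `T`, induced from pointwise convergence of characters. -/
noncomputable instance : TopologicalSpace Λ.TightT :=
  TopologicalSpace.induced (fun ξ => Λ.charOf ξ.carrier) inferInstance

/-- The groupoid `Γ ⊆ T × ℤ × T` as a type. -/
structure GammaT where
  fst : Λ.TightT
  mid : ℤ
  lst : Λ.TightT
  mem : Λ.InGamma fst.carrier mid lst.carrier

/-- The raw triple underlying an element of `Γ`. -/
def rawOf (p : Λ.GammaT) : Set (Tr V A) × ℤ × Set (Tr V A) :=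
  (p.fst.carrier, p.mid, p.lst.carrier)

/-- The collection of all sets `Z_{s,e:e₁,…,eₙ}` (for `s ∈ S`, `e, eᵢ ∈ E(S)`),
as subsets of `Γ`. -/
noncomputable def ZBasisT : Set (Set Λ.GammaT) :=
  {Z | ∃ (μ : List A) (X : Set V) (ν : List A) (e : Tr V A) (es : List (Tr V A)),
    Tr.mk μ X ν ∈ Λ.SSet ∧ e ∈ Λ.ESet ∧ (∀ f ∈ es, f ∈ Λ.ESet) ∧
    Z = {p : Λ.GammaT | Λ.rawOf p ∈ Λ.ZrawGen μ ν e es}}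

/-- The topology on `Γ` induced by the isomorphism `Φ` from the germ topology of
`𝒢_tight`, generated by the images of the basic sets `Θ(s, 𝒰)` with `𝒰 ⊆ D_{s*s}`
open in the tight spectrum. -/
noncomputable def PhiTopology : TopologicalSpace Λ.GammaT :=
  TopologicalSpace.generateFrom
    {Z | ∃ (s : Tr V A) (U : Set (Tr V A → Bool)), s ∈ Λ.SSet ∧
      (∃ W, IsOpen W ∧ U = W ∩ Λ.tightSpectrum) ∧
      (∀ φ ∈ U, φ (Λ.tmul (Tr.tstar s) s) = true) ∧
      Z = {p : Λ.GammaT | ∃ φ ∈ U, (s, φ) ∈ Λ.Omega ∧ Λ.PhiRaw s φ = Λ.rawOf p}}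

end LblSp

namespace LblSp

variable {V : Type u} {Ed : Type v} {A : Type w} (Λ : LblSp V Ed A)

/-! ### Auxiliary lemmas -/

lemma relRange_nil' (X : Set V) : Λ.relRange X [] = X := if_pos rfl

lemma rangeL_nil' : Λ.rangeL [] = Set.univ := Λ.relRange_nil' Set.univ

lemma relRange_ne' {μ : List A} (hμ : μ ≠ []) (X : Set V) :
    Λ.relRange X μ = {v | ∃ (l : List Ed) (h : l ≠ []),
      List.Chain' (fun e f => Λ.rng e = Λ.src f) l ∧
      l.map Λ.lab = μ ∧ Λ.src (l.head h) ∈ X ∧ Λ.rng (l.getLast h) = v} := if_neg hμ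

lemma relRange_mono' {X Y : Set V} (h : X ⊆ Y) (μ : List A) :
    Λ.relRange X μ ⊆ Λ.relRange Y μ := by
  rcases eq_or_ne μ [] with rfl | hμ
  · rw [relRange_nil', relRange_nil']; exact h
  · rw [relRange_ne' Λ hμ, relRange_ne' Λ hμ]
    rintro v ⟨l, hl, c, m, hx, rfl⟩
    exact ⟨l, hl, c, m, h hx, rfl⟩

lemma relRange_comp' (X : Set V) (μ ν : List A) :
    Λ.relRange (Λ.relRange X μ) ν = Λ.relRange X (μ ++ ν) := by
  rcases eq_or_ne μ [] with rfl | hμ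
  · rw [relRange_nil']; rfl
  rcases eq_or_ne ν [] with rfl | hν
  · rw [relRange_nil', List.append_nil]
  have hμν : μ ++ ν ≠ [] := by simp [hμ]
  ext v
  rw [relRange_ne' Λ hν, relRange_ne' Λ hμν]
  constructor
  · rintro ⟨l2, h2, c2, m2, hsrc, rfl⟩
    rw [relRange_ne' Λ hμ] at hsrc
    obtain ⟨l1, h1, c1, m1, hx, hlast⟩ := hsrc
    refine ⟨l1 ++ l2, by simp [h1], ?_, by simp [m1, m2], ?_, ?_⟩
    · rw [List.Chain', List.isChain_append]
      refine ⟨c1, c2, ?_⟩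
      intro x hx' y hy'
      rw [List.getLast?_eq_getLast h1, Option.mem_some_iff] at hx'
      rw [List.head?_eq_head h2, Option.mem_some_iff] at hy'
      subst hx'; subst hy'
      rw [hlast]
    · rw [List.head_append_of_ne_nil h1]; exact hx
    · rw [List.getLast_append_of_ne_nil _ h2]
  · rintro ⟨l, h, c, m, hx, rfl⟩
    have m1 : (l.take μ.length).map Λ.lab = μ := by
      rw [List.map_take, m, List.take_left]
    have m2 : (l.drop μ.length).map Λ.lab = ν := by
      rw [List.map_drop, m, List.drop_left]
    have h1 : l.take μ.length ≠ [] := fun h' => hμ (by rw [← m1, h']; rfl)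
    have h2 : l.drop μ.length ≠ [] := fun h' => hν (by rw [← m2, h']; rfl)
    have hsplit : l.take μ.length ++ l.drop μ.length = l := List.take_append_drop _ _
    have csplit : List.Chain' (fun e f => Λ.rng e = Λ.src f)
        (l.take μ.length ++ l.drop μ.length) := by rw [hsplit]; exact c
    refine ⟨l.drop μ.length, h2, c.drop _, m2, ?_, ?_⟩
    · rw [relRange_ne' Λ hμ]
      refine ⟨l.take μ.length, h1, c.take _, m1, ?_, ?_⟩
      · have he : (l.take μ.length).head? = l.head? := by
          conv_rhs => rw [← hsplit]
          rw [List.head?_append_of_ne_nil _ h1]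
        rw [List.head?_eq_head h1, List.head?_eq_head h] at he
        rw [Option.some_inj.mp he]; exact hx
      · have := (List.isChain_append.mp csplit).2.2
        exact this _ (by rw [List.getLast?_eq_getLast h1]; rfl)
          _ (by rw [List.head?_eq_head h2]; rfl)
    · have he : (l.drop μ.length).getLast? = l.getLast? := by
        conv_rhs => rw [← hsplit]
        rw [List.getLast?_append_of_ne_nil _ h2]
      rw [List.getLast?_eq_getLast h2, List.getLast?_eq_getLast h] at he
      rw [Option.some_inj.mp he]

lemma rangeL_append' (μ ν : List A) :
    Λ.rangeL (μ ++ ν) = Λ.relRange (Λ.rangeL μ) ν := (Λ.relRange_comp' _ _ _).symm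

lemma relRange_subset_rangeL' (X : Set V) (μ : List A) :
    Λ.relRange X μ ⊆ Λ.rangeL μ := Λ.relRange_mono' (Set.subset_univ X) μ

lemma rangeL_append_subset' (μ ν : List A) : Λ.rangeL (μ ++ ν) ⊆ Λ.rangeL ν := by
  rw [rangeL_append']; exact Λ.relRange_subset_rangeL' _ _

lemma relRange_subset_rangeL_append' {X : Set V} {ρ : List A} (h : X ⊆ Λ.rangeL ρ)
    (σ : List A) : Λ.relRange X σ ⊆ Λ.rangeL (ρ ++ σ) := by
  rw [rangeL_append']; exact Λ.relRange_mono' h σ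

lemma relRange_nonempty_src' {X : Set V} {μ : List A} (h : (Λ.relRange X μ).Nonempty) :
    X.Nonempty := by
  rcases eq_or_ne μ [] with rfl | hμ
  · rwa [relRange_nil'] at h
  · rw [relRange_ne' Λ hμ] at h
    obtain ⟨v, l, hl, c, m, hx, rfl⟩ := h
    exact ⟨_, hx⟩

lemma not_LStar_relRange' {μ : List A} (hμ : μ ≠ []) (h : μ ∉ Λ.LStar) (X : Set V) :
    Λ.relRange X μ = ∅ := by
  rw [relRange_ne' Λ hμ]
  ext v
  simp only [Set.mem_setOf_eq, Set.mem_empty_iff_false, iff_false]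
  rintro ⟨l, hl, c, m, hx, rfl⟩
  exact h (Or.inr ⟨l, hl, c, m⟩)

lemma prefix_LStar' {μ ν : List A} (hμ : μ ∈ Λ.LStar) (hpre : ν <+: μ) : ν ∈ Λ.LStar := by
  rcases eq_or_ne ν [] with rfl | hν
  · exact Or.inl rfl
  rcases hμ with rfl | ⟨l, hl, c, m⟩
  · exact absurd (List.prefix_nil.mp hpre) hν
  obtain ⟨ρ, rfl⟩ := hpre
  have m1 : (l.take ν.length).map Λ.lab = ν := by rw [List.map_take, m, List.take_left]
  refine Or.inr ⟨l.take ν.length, ?_, c.take _, m1⟩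
  intro h'
  exact hν (by rw [← m1, h']; rfl)

lemma empty_mem' (hN : Λ.IsNormal) {μ : List A} (hμ : μ ∈ Λ.LStar) (h0 : μ ≠ []) :
    ∅ ∈ Λ.𝒜 := by
  have h1 := hN.toIsWLR.toIsLS.range_mem μ hμ h0
  have h2 := hN.sdiff_mem _ h1 _ h1
  simpa using h2

lemma rangeL_mem₂ (hN : Λ.IsNormal) (hE : ∅ ∈ Λ.𝒜) {μ : List A} (hμ : μ ≠ []) :
    Λ.rangeL μ ∈ Λ.𝒜 := by
  by_cases h : μ ∈ Λ.LStar
  · exact hN.toIsWLR.toIsLS.range_mem μ h hμ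
  · rw [rangeL, Λ.not_LStar_relRange' hμ h]; exact hE

lemma relRange_mem₂ (hN : Λ.IsNormal) (hE : ∅ ∈ Λ.𝒜) {X : Set V} (hX : X ∈ Λ.𝒜)
    (μ : List A) : Λ.relRange X μ ∈ Λ.𝒜 := by
  by_cases h : μ ∈ Λ.LStar
  · exact hN.toIsWLR.toIsLS.relRange_mem X hX μ h
  · have hμ : μ ≠ [] := fun h' => h (h' ▸ Or.inl rfl)
    rw [Λ.not_LStar_relRange' hμ h]; exact hE

lemma wlr₂ (hN : Λ.IsNormal) {X Y : Set V} (hX : X ∈ Λ.𝒜) (hY : Y ∈ Λ.𝒜)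
    {μ : List A} (hμ : μ ≠ []) :
    Λ.relRange (X ∩ Y) μ = Λ.relRange X μ ∩ Λ.relRange Y μ := by
  by_cases h : μ ∈ Λ.LStar
  · exact hN.toIsWLR.wlr X hX Y hY μ h hμ
  · rw [Λ.not_LStar_relRange' hμ h, Λ.not_LStar_relRange' hμ h, Λ.not_LStar_relRange' hμ h]
    simp

/-! ### set helpers -/

lemma inter3a {C X Y : Set V} (h : Y ⊆ X) : C ∩ X ∩ Y = C ∩ Y :=
  Set.ext fun v => ⟨fun hv => ⟨hv.1.1, hv.2⟩, fun hv => ⟨⟨hv.1, h hv.2⟩, hv.2⟩⟩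

lemma inter3b {C X Y : Set V} (h : X ⊆ Y) : X ∩ C ∩ Y = C ∩ X :=
  Set.ext fun v => ⟨fun hv => ⟨hv.1.2, hv.1.1⟩, fun hv => ⟨⟨hv.2, hv.1⟩, h hv.2⟩⟩

/-! ### Filter lemmas -/

lemma filter_dat' {ξ : Set (Tr V A)} (hfil : Λ.IsFilterES ξ) {δ : List A} {B : Set V}
    (h : Tr.mk δ B δ ∈ ξ) : δ ∈ Λ.LStar ∧ B ∈ Λ.Aset δ ∧ B.Nonempty := by
  obtain ⟨hES, hne⟩ := hfil.2.1 _ h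
  rcases hES with h0 | ⟨δ', B', heq, hδ', hB', hBne⟩
  · exact absurd h0 hne
  · injection heq with e1 e2 e3
    subst e1; subst e2
    exact ⟨hδ', hB', hBne⟩

lemma filter_inter_nil' {ξ : Set (Tr V A)} (hfil : Λ.IsFilterES ξ) {C C' : Set V}
    (h1 : Tr.mk [] C [] ∈ ξ) (h2 : Tr.mk [] C' [] ∈ ξ) : Tr.mk [] (C ∩ C') [] ∈ ξ := by
  have hm := hfil.2.2.1 _ h1 _ h2
  simp only [tmul, List.nil_prefix, List.drop_nil, relRange_nil', true_and,
    List.nil_append] at hm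
  split_ifs at hm with hp
  · exact hm
  · exact ((hfil.2.1 _ hm).2 rfl).elim

lemma filter_up_nil' {ξ : Set (Tr V A)} (hfil : Λ.IsFilterES ξ) {C C' : Set V}
    (h1 : Tr.mk [] C [] ∈ ξ) (hC' : C' ∈ Λ.𝒜) (hsub : C ⊆ C') : Tr.mk [] C' [] ∈ ξ := by
  have hC := (Λ.filter_dat' hfil h1).2.2
  apply hfil.2.2.2 _ h1 (Tr.mk [] C' [])
  · exact Or.inr ⟨[], C', rfl, Or.inl rfl,
      ⟨hC', by rw [rangeL_nil']; exact Set.subset_univ _⟩, hC.mono hsub⟩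
  · simp only [tmul, List.nil_prefix, List.drop_nil, relRange_nil', true_and,
      List.nil_append]
    rw [Set.inter_eq_left.mpr hsub, if_pos hC]

lemma filter_shift1' {ξ : Set (Tr V A)} (hfil : Λ.IsFilterES ξ) {R C : Set V} {b : A}
    (h1 : Tr.mk [] R [] ∈ ξ) (h2 : Tr.mk [b] C [b] ∈ ξ) :
    Tr.mk [b] (Λ.relRange R [b] ∩ C) [b] ∈ ξ := by
  have hm := hfil.2.2.1 _ h1 _ h2
  simp only [tmul, List.nil_prefix, List.length_nil, List.drop_zero, true_and,
    List.nil_append] at hm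
  split_ifs at hm with hp hq
  · exact hm
  · exact absurd (List.prefix_nil.mp hq.1) (by simp)
  · exact ((hfil.2.1 _ hm).2 rfl).elim

lemma filter_up_prefix' (hN : Λ.IsNormal) (hE : ∅ ∈ Λ.𝒜) {ξ : Set (Tr V A)}
    (hfil : Λ.IsFilterES ξ) {δ δ' : List A} {B : Set V}
    (h : Tr.mk δ B δ ∈ ξ) (hpre : δ' <+: δ) (hδ' : δ' ≠ []) :
    Tr.mk δ' (Λ.rangeL δ') δ' ∈ ξ := by
  obtain ⟨hLs, ⟨hBA, hBsub⟩, hBne⟩ := Λ.filter_dat' hfil h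
  obtain ⟨ρ, rfl⟩ := hpre
  have hq : Tr.mk δ' (Λ.rangeL δ') δ' ∈ Λ.ESet := by
    refine Or.inr ⟨δ', _, rfl, Λ.prefix_LStar' hLs (List.prefix_append _ _),
      ⟨Λ.rangeL_mem₂ hN hE hδ', subset_rfl⟩, ?_⟩
    apply Λ.relRange_nonempty_src' (μ := ρ)
    refine hBne.mono ?_
    rw [← rangeL_append']
    exact hBsub
  apply hfil.2.2.2 _ h _ hq
  rcases eq_or_ne ρ [] with rfl | hρ
  · simp only [List.append_nil] at hBsub ⊢
    have c1 : (δ' <+: δ') ∧ (Λ.relRange B (δ'.drop δ'.length) ∩ Λ.rangeL δ').Nonempty := by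
      rw [List.drop_length, relRange_nil', Set.inter_eq_left.mpr hBsub]
      exact ⟨List.prefix_refl _, hBne⟩
    simp only [tmul]
    rw [if_pos c1, List.drop_length, relRange_nil', Set.inter_eq_left.mpr hBsub,
      List.append_nil]
  · have c1 : ¬ ((δ' ++ ρ <+: δ') ∧
        (Λ.relRange B (δ'.drop (δ' ++ ρ).length) ∩ Λ.rangeL δ').Nonempty) := by
      rintro ⟨hp, -⟩
      have h2 := hp.length_le
      rw [List.length_append] at h2
      exact hρ (List.length_eq_zero_iff.mp (by omega))
    have hsub2 : B ⊆ Λ.relRange (Λ.rangeL δ') ((δ' ++ ρ).drop δ'.length) := by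
      rw [List.drop_left, ← rangeL_append']
      exact hBsub
    have c2 : (δ' <+: δ' ++ ρ) ∧
        (B ∩ Λ.relRange (Λ.rangeL δ') ((δ' ++ ρ).drop δ'.length)).Nonempty := by
      rw [Set.inter_eq_left.mpr hsub2]
      exact ⟨List.prefix_append _ _, hBne⟩
    simp only [tmul]
    rw [if_neg c1, if_pos c2, Set.inter_eq_left.mpr hsub2, List.drop_left]

/-! ### Gglue membership -/

lemma mem_Gglue_pos {α : List A} {ξ : Set (Tr V A)} (hα0 : α ≠ [])
    (hP : ∃ (δ : List A) (B : Set V), δ ≠ [] ∧ Tr.mk δ B δ ∈ ξ) (t : Tr V A) :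
    t ∈ Λ.Gglue α ξ ↔ ∃ δ B, t = Tr.mk δ B δ ∧
      ((α <+: δ ∧ α ≠ δ ∧ ∃ C, Tr.mk (δ.drop α.length) C (δ.drop α.length) ∈ ξ ∧
          B = C ∩ Λ.rangeL δ) ∨
       (δ <+: α ∧ B ∈ Λ.Aset δ ∧ ∃ (b : A) (C : Set V), Tr.mk [b] C [b] ∈ ξ ∧
          Λ.relRange B (α.drop δ.length ++ [b]) = C ∩ Λ.rangeL (α ++ [b]))) := by
  unfold Gglue
  rw [if_neg hα0, if_pos hP]
  exact Iff.rfl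

lemma mem_Gglue_neg {α : List A} {ξ : Set (Tr V A)} (hα0 : α ≠ [])
    (hP : ¬ ∃ (δ : List A) (B : Set V), δ ≠ [] ∧ Tr.mk δ B δ ∈ ξ) (t : Tr V A) :
    t ∈ Λ.Gglue α ξ ↔ ∃ δ B, t = Tr.mk δ B δ ∧ δ <+: α ∧ B ∈ Λ.Aset δ ∧
      ∃ C, Tr.mk [] C [] ∈ ξ ∧ Λ.relRange B (α.drop δ.length) = C ∩ Λ.rangeL α := by
  unfold Gglue
  rw [if_neg hα0, if_neg hP]
  exact Iff.rfl


/-- For `α, β ∈ ℒ^{≥1}` and `γ ∈ ℒ^{≤∞}` with `αβγ ∈ ℒ^{≤∞}`,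
`G_{(αβ)γ} = G_{(α)βγ} ∘ G_{(β)γ}` and `H_{[β]γ} ∘ H_{[α]βγ} = H_{[αβ]γ}`. -/
theorem statement_19 (hΛ : Λ.IsNormal) (α β : List A) (hα : α ∈ Λ.LStar) (hα0 : α ≠ [])
    (hβ : β ∈ Λ.LStar) (hβ0 : β ≠ []) (γ : Word A) (hγ : Λ.IsWordW γ)
    (hαβγ : Λ.IsWordW (wappend α (wappend β γ))) :
    (∀ ξ ∈ Λ.TGlueDom (α ++ β) γ, Λ.Gglue (α ++ β) ξ = Λ.Gglue α (Λ.Gglue β ξ)) ∧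
    (∀ ξ ∈ Λ.TWord (wappend α (wappend β γ)),
      Λ.Hcut β (Λ.Hcut α ξ) = Λ.Hcut (α ++ β) ξ) := by
  classical
  have hE : ∅ ∈ Λ.𝒜 := Λ.empty_mem' hΛ hβ hβ0
  have hdrop : ∀ (u v : List A), (u ++ v).drop u.length = v := fun u v => List.drop_left (l₁ := u) (l₂ := v)
  have happne : ∀ (u ρ : List A), ρ ≠ [] → u ≠ u ++ ρ := by
    intro u ρ hρ hh
    have hl := congrArg List.length hh
    rw [List.length_append] at hl
    exact hρ (List.length_eq_zero_iff.mp (by omega))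
  have hαβ0 : α ++ β ≠ [] := by simp [hα0]
  obtain ⟨b₁, β₂, hβc⟩ : ∃ b t, β = b :: t := List.exists_cons_of_ne_nil hβ0
  have hb₁ : [b₁] ++ β₂ = β := hβc.symm
  have hb₁pre : [b₁] <+: β := ⟨β₂, hb₁⟩
  constructor
  · -- ==================== G part ====================
    rintro ξ ⟨htight, hword, hdom⟩
    have hfil : Λ.IsFilterES ξ := htight.1
    have hR : Tr.mk [] (Λ.rangeL (α ++ β)) [] ∈ ξ := hdom hαβ0
    have hsub_range : ∀ (b : A), Λ.rangeL (α ++ β ++ [b]) ⊆ Λ.rangeL (β ++ [b]) := by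
      intro b; rw [List.append_assoc]; exact Λ.rangeL_append_subset' α (β ++ [b])
    have hshift : ∀ (b : A) (C : Set V), Tr.mk [b] C [b] ∈ ξ →
        Tr.mk [b] (Λ.rangeL (α ++ β ++ [b]) ∩ C) [b] ∈ ξ := by
      intro b C hbC
      have h2 := Λ.filter_shift1' hfil hR hbC
      rwa [← rangeL_append'] at h2
    by_cases hP : ∃ (δ : List A) (B : Set V), δ ≠ [] ∧ Tr.mk δ B δ ∈ ξ
    · -- ========== Case: the word of ξ is nonempty ==========
      have hPG : ∃ (δ : List A) (B : Set V), δ ≠ [] ∧ Tr.mk δ B δ ∈ Λ.Gglue β ξ := by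
        obtain ⟨δ₀, B₀, hδ₀, hmem₀⟩ := id hP
        obtain ⟨b₀, δ₀', hδc⟩ : ∃ b t, δ₀ = b :: t := List.exists_cons_of_ne_nil hδ₀
        have hb₀ : Tr.mk [b₀] (Λ.rangeL [b₀]) [b₀] ∈ ξ :=
          Λ.filter_up_prefix' hΛ hE hfil hmem₀ (by rw [hδc]; exact ⟨δ₀', rfl⟩) (by simp)
        refine ⟨β, Λ.rangeL β, hβ0, ?_⟩
        rw [Λ.mem_Gglue_pos hβ0 hP]
        refine ⟨β, _, rfl, Or.inr ⟨List.prefix_refl β,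
          ⟨Λ.rangeL_mem₂ hΛ hE hβ0, subset_rfl⟩, b₀, Λ.rangeL [b₀], hb₀, ?_⟩⟩
        rw [List.drop_length, List.nil_append, ← rangeL_append']
        exact (Set.inter_eq_right.mpr (Λ.rangeL_append_subset' β [b₀])).symm
      ext t
      rw [Λ.mem_Gglue_pos hαβ0 hP, Λ.mem_Gglue_pos hα0 hPG]
      constructor
      · rintro ⟨δ, B, rfl, hcase⟩
        refine ⟨δ, B, rfl, ?_⟩
        rcases hcase with ⟨⟨ρ, hρeq⟩, hne, C, hC, hBeq⟩ | ⟨hpre, hBA, b, C, hbC, heq⟩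
        · -- (A1) : δ = (α++β)++ρ
          subst hρeq
          have hρ0 : ρ ≠ [] := fun h0 => hne (by rw [h0, List.append_nil])
          have hCd : Tr.mk ρ C ρ ∈ ξ := by rwa [hdrop (α ++ β) ρ] at hC
          refine Or.inl ⟨⟨β ++ ρ, by rw [List.append_assoc]⟩, ?_, C ∩ Λ.rangeL (β ++ ρ),
            ?_, ?_⟩
          · rw [List.append_assoc]; exact happne α (β ++ ρ) (by simp [hβ0])
          · have hd : ((α ++ β) ++ ρ).drop α.length = β ++ ρ := by
              rw [List.append_assoc]; exact hdrop α (β ++ ρ)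
            rw [hd, Λ.mem_Gglue_pos hβ0 hP]
            refine ⟨β ++ ρ, _, rfl, Or.inl ⟨List.prefix_append _ _, happne β ρ hρ0, C, ?_, rfl⟩⟩
            rw [hdrop β ρ]; exact hCd
          · have hsub : Λ.rangeL ((α ++ β) ++ ρ) ⊆ Λ.rangeL (β ++ ρ) := by
              rw [List.append_assoc]; exact Λ.rangeL_append_subset' α (β ++ ρ)
            rw [hBeq]
            exact (inter3a hsub).symm
        · -- (A2) : δ <+: α++β
          by_cases hx : α <+: δ ∧ α ≠ δ
          · -- α a proper prefix of δ
            obtain ⟨⟨ε, hε⟩, hneαδ⟩ := hx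
            subst hε
            obtain ⟨σ, hσ⟩ : ε <+: β := by
              obtain ⟨w, hw⟩ := hpre
              exact ⟨w, List.append_cancel_left
                (show α ++ (ε ++ w) = α ++ β by rw [← List.append_assoc]; exact hw)⟩
            have hC'' := hshift b C hbC
            have hdropd : (α ++ β).drop (α ++ ε).length = σ := by
              rw [← hσ, ← List.append_assoc]; exact hdrop (α ++ ε) σ
            have hdropβ : β.drop ε.length = σ := by rw [← hσ]; exact hdrop ε σ
            refine Or.inl ⟨⟨ε, rfl⟩, hneαδ, B, ?_, (Set.inter_eq_left.mpr hBA.2).symm⟩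
            rw [hdrop α ε, Λ.mem_Gglue_pos hβ0 hP]
            refine ⟨ε, B, rfl, Or.inr ⟨⟨σ, hσ⟩,
              ⟨hBA.1, hBA.2.trans (Λ.rangeL_append_subset' α ε)⟩,
              b, Λ.rangeL (α ++ β ++ [b]) ∩ C, hC'', ?_⟩⟩
            rw [hdropβ, inter3b (hsub_range b)]
            rw [hdropd] at heq
            exact heq
          · -- δ <+: α
            have hδα : δ <+: α := by
              rcases List.prefix_or_prefix_of_prefix hpre (List.prefix_append α β) with h1 | h1
              · exact h1
              · rcases eq_or_ne α δ with h2 | h2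
                · exact h2 ▸ List.prefix_refl _
                · exact absurd ⟨h1, h2⟩ hx
            obtain ⟨τ, hτ⟩ := hδα
            have hC'' := hshift b C hbC
            have hd : (α ++ β).drop δ.length = τ ++ β := by
              rw [← hτ, List.append_assoc]; exact hdrop δ (τ ++ β)
            have hdα : α.drop δ.length = τ := by rw [← hτ]; exact hdrop δ τ
            have hC₂sub : Λ.relRange B (τ ++ [b₁]) ⊆ Λ.rangeL (α ++ [b₁]) := by
              have h3 := Λ.relRange_subset_rangeL_append' hBA.2 (τ ++ [b₁])
              rwa [← List.append_assoc, hτ] at h3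
            refine Or.inr ⟨⟨τ, hτ⟩, hBA, b₁, Λ.relRange B (τ ++ [b₁]), ?_, ?_⟩
            · rw [Λ.mem_Gglue_pos hβ0 hP]
              refine ⟨[b₁], Λ.relRange B (τ ++ [b₁]), rfl, Or.inr ⟨hb₁pre,
                ⟨Λ.relRange_mem₂ hΛ hE hBA.1 _,
                  hC₂sub.trans (Λ.rangeL_append_subset' α [b₁])⟩,
                b, Λ.rangeL (α ++ β ++ [b]) ∩ C, hC'', ?_⟩⟩
              have h1 : β.drop ([b₁] : List A).length = β₂ := by rw [hβc]; rfl
              rw [h1, relRange_comp']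
              have hlist : (τ ++ [b₁]) ++ (β₂ ++ [b]) = ((α ++ β).drop δ.length) ++ [b] := by
                rw [hd, ← hb₁]; simp [List.append_assoc]
              rw [hlist, heq, inter3b (hsub_range b)]
            · rw [hdα]
              exact (Set.inter_eq_left.mpr hC₂sub).symm
      · rintro ⟨δ, B, rfl, hcase⟩
        refine ⟨δ, B, rfl, ?_⟩
        rcases hcase with ⟨⟨ε, hε⟩, hneαδ, C₂, hC₂, hBeq⟩ | ⟨hδα, hBA, b', C₂, hbC₂, heq⟩
        · -- (B1)
          subst hε
          have hε0 : ε ≠ [] := fun h0 => hneαδ (by rw [h0, List.append_nil])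
          rw [hdrop α ε, Λ.mem_Gglue_pos hβ0 hP] at hC₂
          obtain ⟨ε', C₂', heq', hcase'⟩ := hC₂
          injection heq' with e1 e2 e3
          subst e1; subst e2
          rcases hcase' with ⟨⟨ρ, hρ⟩, hneβε, C, hC, hC₂eq⟩ | ⟨⟨σ, hσ⟩, hC₂A, b', C', hbC', heq2⟩
          · -- (B1-i) : ε = β ++ ρ
            have hρ0 : ρ ≠ [] := fun h0 => hneβε (by rw [← hρ, h0, List.append_nil])
            rw [← hρ, hdrop β ρ] at hC
            refine Or.inl ⟨⟨ρ, by rw [List.append_assoc, hρ]⟩, ?_, C, ?_, ?_⟩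
            · rw [← hρ, ← List.append_assoc]; exact happne (α ++ β) ρ hρ0
            · have hd : (α ++ ε).drop (α ++ β).length = ρ := by
                rw [← hρ, ← List.append_assoc]; exact hdrop (α ++ β) ρ
              rw [hd]; exact hC
            · rw [hBeq, hC₂eq]
              exact inter3a (Λ.rangeL_append_subset' α ε)
          · -- (B1-ii) : ε <+: β
            have hαε0 : α ++ ε ≠ [] := by simp [hα0]
            refine Or.inr ⟨⟨σ, by rw [List.append_assoc, hσ]⟩, ?_, b', C', hbC', ?_⟩
            · rw [hBeq]
              exact ⟨hΛ.toIsWLR.toIsLS.inter_mem _ hC₂A.1 _ (Λ.rangeL_mem₂ hΛ hE hαε0),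
                Set.inter_subset_right⟩
            · have hd : (α ++ β).drop (α ++ ε).length = σ := by
                rw [← hσ, ← List.append_assoc]; exact hdrop (α ++ ε) σ
              have hdβ : β.drop ε.length = σ := by rw [← hσ]; exact hdrop ε σ
              rw [hdβ] at heq2
              have hne1 : σ ++ [b'] ≠ [] := by simp
              rw [hd, hBeq, Λ.wlr₂ hΛ hC₂A.1 (Λ.rangeL_mem₂ hΛ hE hαε0) hne1,
                ← rangeL_append']
              have hlist : (α ++ ε) ++ (σ ++ [b']) = (α ++ β) ++ [b'] := by
                rw [← hσ]; simp [List.append_assoc]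
              rw [hlist, heq2]
              exact inter3a (hsub_range b')
        · -- (B2)
          have hδαβ : δ <+: α ++ β := hδα.trans (List.prefix_append α β)
          rw [Λ.mem_Gglue_pos hβ0 hP] at hbC₂
          obtain ⟨ε', C₂', heq', hcase'⟩ := hbC₂
          injection heq' with e1 e2 e3
          subst e1; subst e2
          rcases hcase' with ⟨⟨u, hu⟩, hneβ, -⟩ | ⟨⟨u, hu⟩, hC₂A, b'', C', hbC'', heq2⟩
          · exfalso
            rw [hβc, List.cons_append] at hu
            injection hu with e4 e5
            obtain ⟨e6, -⟩ := List.append_eq_nil_iff.mp e5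
            exact hneβ (by rw [hβc, e6, e4])
          · rw [List.singleton_append, hβc] at hu
            injection hu with e7 e8
            have e7' := e7.symm; have e8' := e8.symm
            subst e7'; subst e8'
            obtain ⟨τ, hτ⟩ := hδα
            refine Or.inr ⟨hδαβ, hBA, b'', C', hbC'', ?_⟩
            have hd : (α ++ β).drop δ.length = τ ++ β := by
              rw [← hτ, List.append_assoc]; exact hdrop δ (τ ++ β)
            have hdα : α.drop δ.length = τ := by rw [← hτ]; exact hdrop δ τ
            rw [hdα] at heq
            have h1 : β.drop ([b₁] : List A).length = β₂ := by rw [hβc]; rfl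
            rw [h1] at heq2
            have hlist1 : (τ ++ β) ++ [b''] = (τ ++ [b₁]) ++ (β₂ ++ [b'']) := by
              rw [← hb₁]; simp [List.append_assoc]
            have hαb0 : α ++ [b₁] ≠ [] := by simp
            have hne2 : β₂ ++ [b''] ≠ [] := by simp
            rw [hd, hlist1, ← relRange_comp', heq,
              Λ.wlr₂ hΛ hC₂A.1 (Λ.rangeL_mem₂ hΛ hE hαb0) hne2,
              heq2, ← rangeL_append']
            have hlist2 : (α ++ [b₁]) ++ (β₂ ++ [b'']) = (α ++ β) ++ [b''] := by
              rw [← hb₁]; simp [List.append_assoc]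
            rw [hlist2]
            exact inter3a (hsub_range b'')
    · -- ========== Case: the word of ξ is empty ==========
      have hPS : ∃ (δ : List A) (B : Set V), δ ≠ [] ∧ Tr.mk δ B δ ∈ Λ.Gglue β ξ := by
        refine ⟨β, Λ.rangeL (α ++ β) ∩ Λ.rangeL β, hβ0, ?_⟩
        rw [Λ.mem_Gglue_neg hβ0 hP]
        refine ⟨β, _, rfl, List.prefix_refl β,
          ⟨hΛ.toIsWLR.toIsLS.inter_mem _ (Λ.rangeL_mem₂ hΛ hE hαβ0) _
            (Λ.rangeL_mem₂ hΛ hE hβ0), Set.inter_subset_right⟩,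
          Λ.rangeL (α ++ β), hR, ?_⟩
        rw [List.drop_length, relRange_nil']
      have hinter : ∀ C, Tr.mk [] C [] ∈ ξ → Tr.mk [] (C ∩ Λ.rangeL (α ++ β)) [] ∈ ξ :=
        fun C hC => Λ.filter_inter_nil' hfil hC hR
      have habsorb : ∀ C₀ : Set V,
          C₀ ∩ Λ.rangeL (α ++ β) ∩ Λ.rangeL β = C₀ ∩ Λ.rangeL (α ++ β) :=
        fun C₀ => Set.inter_eq_left.mpr
          (Set.inter_subset_right.trans (Λ.rangeL_append_subset' α β))
      ext t
      rw [Λ.mem_Gglue_neg hαβ0 hP, Λ.mem_Gglue_pos hα0 hPS]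
      constructor
      · rintro ⟨δ, B, rfl, hpre, hBA, C₀, hC₀, heq⟩
        refine ⟨δ, B, rfl, ?_⟩
        by_cases hx : α <+: δ ∧ α ≠ δ
        · obtain ⟨⟨ε, hε⟩, hneαδ⟩ := hx
          subst hε
          obtain ⟨σ, hσ⟩ : ε <+: β := by
            obtain ⟨w, hw⟩ := hpre
            exact ⟨w, List.append_cancel_left
              (show α ++ (ε ++ w) = α ++ β by rw [← List.append_assoc]; exact hw)⟩
          have hd2 : (α ++ β).drop (α ++ ε).length = σ := by
            rw [← hσ, ← List.append_assoc]; exact hdrop (α ++ ε) σ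
          have hd3 : β.drop ε.length = σ := by rw [← hσ]; exact hdrop ε σ
          refine Or.inl ⟨⟨ε, rfl⟩, hneαδ, B, ?_, (Set.inter_eq_left.mpr hBA.2).symm⟩
          rw [hdrop α ε, Λ.mem_Gglue_neg hβ0 hP]
          refine ⟨ε, B, rfl, ⟨σ, hσ⟩, ⟨hBA.1, hBA.2.trans (Λ.rangeL_append_subset' α ε)⟩,
            C₀ ∩ Λ.rangeL (α ++ β), hinter C₀ hC₀, ?_⟩
          rw [hd2] at heq
          rw [hd3, heq, habsorb]
        · have hδα : δ <+: α := by
            rcases List.prefix_or_prefix_of_prefix hpre (List.prefix_append α β) with h1 | h1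
            · exact h1
            · rcases eq_or_ne α δ with h2 | h2
              · exact h2 ▸ List.prefix_refl _
              · exact absurd ⟨h1, h2⟩ hx
          obtain ⟨τ, hτ⟩ := hδα
          have hd : (α ++ β).drop δ.length = τ ++ β := by
            rw [← hτ, List.append_assoc]; exact hdrop δ (τ ++ β)
          have hdα : α.drop δ.length = τ := by rw [← hτ]; exact hdrop δ τ
          have hC₂sub : Λ.relRange B (τ ++ [b₁]) ⊆ Λ.rangeL (α ++ [b₁]) := by
            have h3 := Λ.relRange_subset_rangeL_append' hBA.2 (τ ++ [b₁])
            rwa [← List.append_assoc, hτ] at h3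
          refine Or.inr ⟨⟨τ, hτ⟩, hBA, b₁, Λ.relRange B (τ ++ [b₁]), ?_, ?_⟩
          · rw [Λ.mem_Gglue_neg hβ0 hP]
            refine ⟨[b₁], Λ.relRange B (τ ++ [b₁]), rfl, hb₁pre,
              ⟨Λ.relRange_mem₂ hΛ hE hBA.1 _,
                hC₂sub.trans (Λ.rangeL_append_subset' α [b₁])⟩,
              C₀ ∩ Λ.rangeL (α ++ β), hinter C₀ hC₀, ?_⟩
            have h1 : β.drop ([b₁] : List A).length = β₂ := by rw [hβc]; rfl
            rw [h1, relRange_comp']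
            have hlist : (τ ++ [b₁]) ++ β₂ = τ ++ β := by rw [← hb₁]; simp [List.append_assoc]
            rw [hd] at heq
            rw [hlist, heq, habsorb]
          · rw [hdα]
            exact (Set.inter_eq_left.mpr hC₂sub).symm
      · rintro ⟨δ, B, rfl, hcase⟩
        rcases hcase with ⟨⟨ε, hε⟩, hneαδ, C₂, hC₂, hBeq⟩ | ⟨hδα, hBA, b', C₂, hbC₂, heq⟩
        · subst hε
          rw [hdrop α ε, Λ.mem_Gglue_neg hβ0 hP] at hC₂
          obtain ⟨ε', C₂', heq', ⟨σ, hσ⟩, hC₂A, C₀, hC₀, heq2⟩ := hC₂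
          injection heq' with e1 e2 e3
          subst e1; subst e2
          have hαε0 : α ++ ε ≠ [] := by simp [hα0]
          have hd2 : (α ++ β).drop (α ++ ε).length = σ := by
            rw [← hσ, ← List.append_assoc]; exact hdrop (α ++ ε) σ
          have hd3 : β.drop ε.length = σ := by rw [← hσ]; exact hdrop ε σ
          rw [hd3] at heq2
          refine ⟨α ++ ε, B, rfl, ⟨σ, by rw [List.append_assoc, hσ]⟩, ?_, C₀, hC₀, ?_⟩
          · rw [hBeq]
            exact ⟨hΛ.toIsWLR.toIsLS.inter_mem _ hC₂A.1 _ (Λ.rangeL_mem₂ hΛ hE hαε0),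
              Set.inter_subset_right⟩
          · rw [hd2, hBeq]
            rcases eq_or_ne σ [] with rfl | hσ0
            · rw [List.append_nil] at hσ
              rw [relRange_nil'] at heq2 ⊢
              rw [heq2, hσ]
              exact inter3a (Λ.rangeL_append_subset' α β)
            · rw [Λ.wlr₂ hΛ hC₂A.1 (Λ.rangeL_mem₂ hΛ hE hαε0) hσ0, heq2, ← rangeL_append']
              have hlist : (α ++ ε) ++ σ = α ++ β := by rw [← hσ]; simp [List.append_assoc]
              rw [hlist]
              exact inter3a (Λ.rangeL_append_subset' α β)
        · have hδαβ : δ <+: α ++ β := hδα.trans (List.prefix_append α β)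
          rw [Λ.mem_Gglue_neg hβ0 hP] at hbC₂
          obtain ⟨ε', C₂', heq', ⟨u, hu⟩, hC₂A, C₀, hC₀, heq2⟩ := hbC₂
          injection heq' with e1 e2 e3
          subst e1; subst e2
          rw [List.singleton_append, hβc] at hu
          injection hu with e7 e8
          have e7' := e7.symm; have e8' := e8.symm
          subst e7'; subst e8'
          obtain ⟨τ, hτ⟩ := hδα
          refine ⟨δ, B, rfl, hδαβ, hBA, C₀, hC₀, ?_⟩
          have hd : (α ++ β).drop δ.length = τ ++ β := by
            rw [← hτ, List.append_assoc]; exact hdrop δ (τ ++ β)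
          have hdα : α.drop δ.length = τ := by rw [← hτ]; exact hdrop δ τ
          rw [hdα] at heq
          have h1 : β.drop ([b₁] : List A).length = β₂ := by rw [hβc]; rfl
          rw [h1] at heq2
          have hlist1 : τ ++ β = (τ ++ [b₁]) ++ β₂ := by rw [← hb₁]; simp [List.append_assoc]
          rw [hd, hlist1, ← relRange_comp', heq]
          rcases eq_or_ne β₂ [] with rfl | hβ₂
          · rw [relRange_nil'] at heq2 ⊢
            rw [heq2]
            have hl2 : α ++ [b₁] = α ++ β := by rw [← hb₁]; simp
            rw [hl2]
            exact inter3a (Λ.rangeL_append_subset' α β)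
          · have hαb0 : α ++ [b₁] ≠ [] := by simp
            rw [Λ.wlr₂ hΛ hC₂A.1 (Λ.rangeL_mem₂ hΛ hE hαb0) hβ₂, heq2,
              ← rangeL_append']
            have hlist2 : (α ++ [b₁]) ++ β₂ = α ++ β := by rw [← hb₁]; simp [List.append_assoc]
            rw [hlist2]
            exact inter3a (Λ.rangeL_append_subset' α β)
  · -- ==================== H part ====================
    rintro ξ ⟨htight, hword⟩
    have hfil : Λ.IsFilterES ξ := htight.1
    simp only [Hcut, if_neg hα0, if_neg hβ0, if_neg hαβ0]
    ext t
    simp only [Set.mem_setOf_eq]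
    constructor
    · rintro ⟨δ, B, rfl, hB, D, hD, hDB⟩
      obtain ⟨δ', B', heq', hB', D', hD', hsub'⟩ := hD
      injection heq' with e1 e2 e3
      subst e1; subst e2
      refine ⟨δ, B, rfl, hB, D', ?_, hsub'.trans hDB⟩
      rw [List.append_assoc]
      exact hD'
    · rintro ⟨δ, B, rfl, hB, D, hD, hDB⟩
      have hD2 : Tr.mk (α ++ (β ++ δ)) D (α ++ (β ++ δ)) ∈ ξ := by
        rw [← List.append_assoc]; exact hD
      have hDA := (Λ.filter_dat' hfil hD2).2.1
      exact ⟨δ, B, rfl, hB, D, ⟨β ++ δ, D, rfl,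
        ⟨hDA.1, hDA.2.trans (Λ.rangeL_append_subset' α (β ++ δ))⟩, D, hD2, subset_rfl⟩, hDB⟩

end LblSp
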